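/- Let m2 and n be positive integers, let q be a prime dividing m2, and let x be an integer with 0 < x < n. For each prime r dividing m2 write α_r for the r-adic valuation of m2. Then x = m2·q if and only if the following three conditions all hold: (iv) for every prime r dividing m2 with r ≠ q, r^(α_r) divides x and r^(α_r+1) does not divide x; (v) q^(α_q+1) divides x and q^(α_q+2) does not divide x; (vi) for every prime s with m2·s < n and s not dividing m2, s does not divide x. -/
import Mathlib

theorem stmt_5_nat (m2 n : ℕ) (hm2 : 0 < m2) (q : ℕ) (hq : q.Prime)
    (hqm2 : q ∣ m2) (y : ℕ) (hy0 : 0 < y) (hyn : y < n) :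
    y = m2 * q ↔
      ((∀ r : ℕ, r.Prime → r ∣ m2 → r ≠ q →
          (r ^ (m2.factorization r) ∣ y ∧ ¬ r ^ (m2.factorization r + 1) ∣ y)) ∧
        (q ^ (m2.factorization q + 1) ∣ y ∧ ¬ q ^ (m2.factorization q + 2) ∣ y) ∧
        (∀ s : ℕ, s.Prime → m2 * s < n → ¬ s ∣ m2 → ¬ s ∣ y)) := by
  have hm2q : m2 * q ≠ 0 := Nat.mul_ne_zero hm2.ne' hq.pos.ne'
  have hfact : ∀ r : ℕ, (m2 * q).factorization r
      = m2.factorization r + (if q = r then 1 else 0) := by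
    intro r
    rw [Nat.factorization_mul hm2.ne' hq.pos.ne', hq.factorization]
    simp [Finsupp.single_apply]
  constructor
  · rintro rfl
    refine ⟨fun r hr hrm2 hrq => ⟨?_, ?_⟩, ⟨?_, ?_⟩, ?_⟩
    · exact dvd_mul_of_dvd_left (Nat.ordProj_dvd m2 r) q
    · rw [hr.pow_dvd_iff_le_factorization hm2q, hfact]
      simp [Ne.symm hrq]
    · calc q ^ (m2.factorization q + 1) = q ^ (m2.factorization q) * q := pow_succ q _
      _ ∣ m2 * q := mul_dvd_mul (Nat.ordProj_dvd m2 q) dvd_rfl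
    · rw [hq.pow_dvd_iff_le_factorization hm2q, hfact]
      simp
    · intro s hs _ hsm2 hsy
      rcases (Nat.Prime.dvd_mul hs).mp hsy with h | h
      · exact hsm2 h
      · exact hsm2 ((Nat.prime_dvd_prime_iff_eq hs hq).mp h ▸ hqm2)
  · rintro ⟨h1, ⟨h2a, h2b⟩, h3⟩
    have hdvd : m2 * q ∣ y := by
      rw [← Nat.factorization_le_iff_dvd hm2q hy0.ne']
      intro r
      by_cases hr : r.Prime
      · by_cases hrm2 : r ∣ m2
        · by_cases hrq : r = q
          · subst hrq
            rw [hfact]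
            simpa [← hr.pow_dvd_iff_le_factorization hy0.ne'] using h2a
          · rw [hfact]
            simp only [Ne.symm hrq, if_false, add_zero]
            rw [← hr.pow_dvd_iff_le_factorization hy0.ne']
            exact (h1 r hr hrm2 hrq).1
        · rw [Nat.factorization_eq_zero_of_not_dvd]
          · exact Nat.zero_le _
          · intro hdvd
            rcases (Nat.Prime.dvd_mul hr).mp hdvd with h | h
            · exact hrm2 h
            · exact hrm2 ((Nat.prime_dvd_prime_iff_eq hr hq).mp h ▸ hqm2)
      · simp [Nat.factorization_eq_zero_of_not_prime _ hr]
    obtain ⟨k, hk⟩ := hdvd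
    have hk0 : k ≠ 0 := by rintro rfl; simp [hk] at hy0
    rcases eq_or_ne k 1 with rfl | hk1
    · simpa using hk
    · exfalso
      have hsp : k.minFac.Prime := Nat.minFac_prime hk1
      have hsk : k.minFac ∣ k := Nat.minFac_dvd k
      set s := k.minFac with hs
      by_cases hsm2 : s ∣ m2
      · by_cases hsq : s = q
        · apply h2b
          rw [← hsq]
          have h1' : s ^ (m2.factorization s + 1) ∣ m2 * q := by
            calc s ^ (m2.factorization s + 1) = s ^ (m2.factorization s) * s := pow_succ s _
            _ ∣ m2 * q := mul_dvd_mul (Nat.ordProj_dvd m2 s) (hsq ▸ dvd_rfl)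
          calc s ^ (m2.factorization s + 2) = s ^ (m2.factorization s + 1) * s := pow_succ s _
          _ ∣ (m2 * q) * k := mul_dvd_mul h1' hsk
          _ = y := hk.symm
        · apply (h1 s hsp hsm2 hsq).2
          calc s ^ (m2.factorization s + 1) = s ^ (m2.factorization s) * s := pow_succ s _
          _ ∣ (m2 * q) * k := mul_dvd_mul (dvd_mul_of_dvd_left (Nat.ordProj_dvd m2 s) q) hsk
          _ = y := hk.symm
      · have hsn : m2 * s < n := by
          have hsk' : s ≤ k := Nat.minFac_le (Nat.pos_of_ne_zero hk0)
          have hlt : s < q * k := by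
            calc s < 2 * s := by have := hsp.two_le; omega
            _ ≤ q * k := Nat.mul_le_mul hq.two_le hsk'
          calc m2 * s < m2 * (q * k) := (mul_lt_mul_iff_right₀ hm2).mpr hlt
          _ = y := by rw [hk, mul_assoc]
          _ < n := hyn
        exact h3 s hsp hsn hsm2 (hk ▸ dvd_mul_of_dvd_right hsk _)

theorem stmt_5 (m2 n : ℕ) (hm2 : 0 < m2) (hn : 0 < n) (q : ℕ) (hq : q.Prime)
    (hqm2 : q ∣ m2) (x : ℤ) (hx0 : 0 < x) (hxn : x < (n : ℤ)) :
    x = (m2 : ℤ) * q ↔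
      ((∀ r : ℕ, r.Prime → r ∣ m2 → r ≠ q →
          ((r : ℤ) ^ (m2.factorization r) ∣ x ∧ ¬ (r : ℤ) ^ (m2.factorization r + 1) ∣ x)) ∧
        ((q : ℤ) ^ (m2.factorization q + 1) ∣ x ∧ ¬ (q : ℤ) ^ (m2.factorization q + 2) ∣ x) ∧
        (∀ s : ℕ, s.Prime → m2 * s < n → ¬ s ∣ m2 → ¬ (s : ℤ) ∣ x)) := by
  obtain ⟨y, rfl⟩ : ∃ y : ℕ, x = (y : ℤ) := ⟨x.toNat, (Int.toNat_of_nonneg hx0.le).symm⟩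
  have hy0 : 0 < y := by exact_mod_cast hx0
  have hyn : y < n := by exact_mod_cast hxn
  have key := stmt_5_nat m2 n hm2 q hq hqm2 y hy0 hyn
  constructor
  · intro h
    have hy : y = m2 * q := by exact_mod_cast h
    rw [key] at hy
    exact ⟨fun r hr h2 h3 => by
        obtain ⟨a, b⟩ := hy.1 r hr h2 h3
        exact ⟨by exact_mod_cast a, by exact_mod_cast b⟩,
      ⟨by exact_mod_cast hy.2.1.1, by exact_mod_cast hy.2.1.2⟩,
      fun s hs h2 h3 => by exact_mod_cast hy.2.2 s hs h2 h3⟩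
  · intro ⟨h1, ⟨h2a, h2b⟩, h3⟩
    have hy : y = m2 * q := key.mpr ⟨fun r hr ha hb => by
        obtain ⟨a, b⟩ := h1 r hr ha hb
        exact ⟨by exact_mod_cast a, by exact_mod_cast b⟩,
      ⟨by exact_mod_cast h2a, by exact_mod_cast h2b⟩,
      fun s hs ha hb => by exact_mod_cast h3 s hs ha hb⟩
    exact_mod_cast congrArg (Nat.cast : ℕ → ℤ) hy
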